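/- Let n ≥ 1 and let p be a permutation of {1,…,n}. Then, as an identity in ℤ[s,t]: (1+s)^{des(p)} (1+t)^{des(p^{-1})} = Σ_{x ∈ basis(p^{-1})} Σ_{u ∈ WI[n], Des(u) ⊆ Des(x)} s^{n − max(u)} t^{n − max(x)}, where max(w) denotes the maximum value of w. -/

import Mathlib

namespace CayPaper

/-- A word of length `n` (1-indexed): it vanishes outside `{1,…,n}`. -/
def IsWord (n : ℕ) (v : ℕ → ℕ) : Prop := ∀ i, i ∉ Set.Icc 1 n → v i = 0

/-- A Cayley permutation of length `n`: a word on `{1,…,n}` whose image is `{1,…,k}`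
for some `k ≤ n`. -/
def IsCayley (n : ℕ) (v : ℕ → ℕ) : Prop :=
  IsWord n v ∧ ∃ k, v '' Set.Icc 1 n = Set.Icc 1 k

/-- A weakly increasing Cayley permutation of length `n`. -/
def IsWI (n : ℕ) (v : ℕ → ℕ) : Prop :=
  IsCayley n v ∧ MonotoneOn v (Set.Icc 1 n)

/-- A permutation of `{1,…,n}`, encoded as a word. -/
def IsPermWord (n : ℕ) (v : ℕ → ℕ) : Prop :=
  IsWord n v ∧ Set.BijOn v (Set.Icc 1 n) (Set.Icc 1 n)

/-- The weak descent set `Des(v) = { i ∈ {1,…,n−1} : v(i) ≥ v(i+1) }`. -/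
def desSet (n : ℕ) (v : ℕ → ℕ) : Finset ℕ :=
  (Finset.Icc 1 (n - 1)).filter fun i => v (i + 1) ≤ v i

/-- The strict descent set `Des∘(v) = { i : v(i) > v(i+1) }`. -/
def sdesSet (n : ℕ) (v : ℕ → ℕ) : Finset ℕ :=
  (Finset.Icc 1 (n - 1)).filter fun i => v (i + 1) < v i

/-- The weak ascent set `Asc(v) = { i : v(i) ≤ v(i+1) }`. -/
def ascSet (n : ℕ) (v : ℕ → ℕ) : Finset ℕ :=
  (Finset.Icc 1 (n - 1)).filter fun i => v i ≤ v (i + 1)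

/-- The strict ascent set `Asc∘(v) = { i : v(i) < v(i+1) }`. -/
def sascSet (n : ℕ) (v : ℕ → ℕ) : Finset ℕ :=
  (Finset.Icc 1 (n - 1)).filter fun i => v i < v (i + 1)

def des (n : ℕ) (v : ℕ → ℕ) : ℕ := (desSet n v).card
def sdes (n : ℕ) (v : ℕ → ℕ) : ℕ := (sdesSet n v).card
def asc (n : ℕ) (v : ℕ → ℕ) : ℕ := (ascSet n v).card
def sasc (n : ℕ) (v : ℕ → ℕ) : ℕ := (sascSet n v).card

/-- The maximum value of a word. -/
def wmax (n : ℕ) (v : ℕ → ℕ) : ℕ := (Finset.Icc 1 n).sup v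

/-- Reverse: `v^r(i) = v(n+1−i)`. -/
def wrev (n : ℕ) (v : ℕ → ℕ) : ℕ → ℕ := fun i =>
  if 1 ≤ i ∧ i ≤ n then v (n + 1 - i) else 0

/-- Complement: `v^c(i) = max(v)+1−v(i)`. -/
def wcomp (n : ℕ) (v : ℕ → ℕ) : ℕ → ℕ := fun i =>
  if 1 ≤ i ∧ i ≤ n then wmax n v + 1 - v i else 0

/-- The word `(σ(1), …, σ(n))` (1-indexed) of a permutation `σ` of `Fin n`. -/
def permWord (n : ℕ) (σ : Equiv.Perm (Fin n)) : ℕ → ℕ := fun i =>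
  if h : 1 ≤ i ∧ i ≤ n then ((σ ⟨i - 1, by omega⟩ : Fin n) : ℕ) + 1 else 0

/-- The conjugate of `u`: the unique weakly increasing Cayley permutation of
length `n` whose descent set is `{1,…,n−1} \ Des(u)`. -/
noncomputable def conjWI (n : ℕ) (u : ℕ → ℕ) : ℕ → ℕ :=
  haveI := Classical.dec (∃ w, IsWI n w ∧ desSet n w = Finset.Icc 1 (n - 1) \ desSet n u)
  if h : ∃ w, IsWI n w ∧ desSet n w = Finset.Icc 1 (n - 1) \ desSet n u
    then h.choose else fun _ => 0

/-- A Burge matrix: every row and every column contains a nonzero entry. -/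
def IsBurge {p q : ℕ} (M : Matrix (Fin p) (Fin q) ℕ) : Prop :=
  (∀ i, ∃ j, M i j ≠ 0) ∧ (∀ j, ∃ i, M i j ≠ 0)

/-- The size of a matrix with natural entries: the sum of its entries. -/
def matSize {p q : ℕ} (M : Matrix (Fin p) (Fin q) ℕ) : ℕ := ∑ i, ∑ j, M i j

/-- Burge matrices of size `n` (of all dimensions). -/
def BurgeMatrices (n : ℕ) : Set (Σ p : ℕ, Σ q : ℕ, Matrix (Fin p) (Fin q) ℕ) :=
  {M | IsBurge M.2.2 ∧ matSize M.2.2 = n}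

/-- Binary Burge matrices of size `n`. -/
def BinaryBurgeMatrices (n : ℕ) : Set (Σ p : ℕ, Σ q : ℕ, Matrix (Fin p) (Fin q) ℕ) :=
  {M | M ∈ BurgeMatrices n ∧ ∀ i j, M.2.2 i j ≤ 1}

/-- Burge matrices of size `n` whose every column sums to `1`. -/
def ColSumOneBurgeMatrices (n : ℕ) : Set (Σ p : ℕ, Σ q : ℕ, Matrix (Fin p) (Fin q) ℕ) :=
  {M | M ∈ BurgeMatrices n ∧ ∀ j, ∑ i, M.2.2 i j = 1}

/-- Burge words: pairs `(u,v) ∈ WI[n] × Cay[n]` with `Des(u) ⊆ Des(v)`. -/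
def BurPairs (n : ℕ) : Set ((ℕ → ℕ) × (ℕ → ℕ)) :=
  {p | IsWI n p.1 ∧ IsCayley n p.2 ∧ desSet n p.1 ⊆ desSet n p.2}

/-- Pairs `(u,v) ∈ WI[n] × Cay[n]` with `Des(u) ⊆ Des∘(v)`. -/
def BBurPairs (n : ℕ) : Set ((ℕ → ℕ) × (ℕ → ℕ)) :=
  {p | IsWI n p.1 ∧ IsCayley n p.2 ∧ desSet n p.1 ⊆ sdesSet n p.2}

/-- Pairs `(u,v) ∈ WI[n] × S_n` with `Des(u) ⊆ Des(v)`. -/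
def PBurPairs (n : ℕ) : Set ((ℕ → ℕ) × (ℕ → ℕ)) :=
  {p | IsWI n p.1 ∧ IsPermWord n p.2 ∧ desSet n p.1 ⊆ desSet n p.2}

/-- `Ω[n]`: pairs `(u,v) ∈ WI[n] × Cay[n]` with `Des(u) ⊇ Des(v)`. -/
def OmegaPairs (n : ℕ) : Set ((ℕ → ℕ) × (ℕ → ℕ)) :=
  {p | IsWI n p.1 ∧ IsCayley n p.2 ∧ desSet n p.2 ⊆ desSet n p.1}

/-- `v` lists the positions `1,…,n` in the order obtained by sorting the columns
`(x_i, i)` so that first components are weakly increasing, ties broken by strictly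
decreasing second components.  For a permutation word `v` this says exactly that
`v = Γ(id, x)`, the bottom row of the Burge transpose of `(id, x)`. -/
def sortsColumns (n : ℕ) (x v : ℕ → ℕ) : Prop :=
  ∀ i ∈ Finset.Icc 1 (n - 1),
    x (v i) < x (v (i + 1)) ∨ (x (v i) = x (v (i + 1)) ∧ v (i + 1) < v i)

/-- The Fishburn basis of a permutation word `v`:
`basis(v) = { x ∈ Cay[n] : Γ(id, x) = v }`. -/
def fishburnBasis (n : ℕ) (v : ℕ → ℕ) : Set (ℕ → ℕ) :=
  {x | IsCayley n x ∧ sortsColumns n x v}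

/-- Stanley's `v`-compatibility condition:
`x(v(1)) ≤ ⋯ ≤ x(v(n))` with strict inequality at every ascent of `v`. -/
def VCompatible (n : ℕ) (v x : ℕ → ℕ) : Prop :=
  (∀ i ∈ Finset.Icc 1 (n - 1), x (v i) ≤ x (v (i + 1))) ∧
    ∀ i ∈ Finset.Icc 1 (n - 1), v i < v (i + 1) → x (v i) < x (v (i + 1))

/-- A map `{1,…,n} → {1,…,m}`, encoded as a word. -/
def IsMapTo (n m : ℕ) (x : ℕ → ℕ) : Prop :=
  IsWord n x ∧ ∀ i ∈ Set.Icc 1 n, x i ∈ Set.Icc 1 m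

/-- Weakly increasing maps `{1,…,n} → {1,…,m}`. -/
def WIgen (n m : ℕ) : Set (ℕ → ℕ) :=
  {u | IsMapTo n m u ∧ MonotoneOn u (Set.Icc 1 n)}


/-! ### Auxiliary development -/

noncomputable local instance : DecidableEq (ℕ → ℕ) := Classical.decEq _

/-- Number of elements of `S` below `j`. -/
def cnt (S : Finset ℕ) (j : ℕ) : ℕ := (S.filter (· < j)).card

/-- The weakly increasing Cayley permutation of length `n` with descent set `S`. -/
def wS (n : ℕ) (S : Finset ℕ) : ℕ → ℕ := fun j =>
  if 1 ≤ j ∧ j ≤ n then j - cnt S j else 0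

lemma cnt_succ (S : Finset ℕ) (j : ℕ) :
    cnt S (j + 1) = cnt S j + if j ∈ S then 1 else 0 := by
  classical
  unfold cnt
  have h : (S.filter (· < j + 1)) = (S.filter (· < j)) ∪ (S.filter (· = j)) := by
    ext x
    simp only [Finset.mem_filter, Finset.mem_union]
    constructor
    · rintro ⟨hx, hlt⟩
      rcases Nat.lt_succ_iff_lt_or_eq.mp hlt with h | h
      · exact Or.inl ⟨hx, h⟩
      · exact Or.inr ⟨hx, h⟩
    · rintro (⟨hx, h⟩ | ⟨hx, h⟩) <;> exact ⟨hx, by omega⟩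
  rw [h, Finset.card_union_of_disjoint, Finset.filter_eq']
  · split <;> simp
  · rw [Finset.disjoint_left]
    intro a ha ha'
    simp only [Finset.mem_filter] at ha ha'
    omega

lemma cnt_le (S : Finset ℕ) (hS : ∀ x ∈ S, 1 ≤ x) (j : ℕ) : cnt S j ≤ j - 1 := by
  have : S.filter (· < j) ⊆ Finset.Ico 1 j := by
    intro x hx
    simp only [Finset.mem_filter] at hx
    exact Finset.mem_Ico.mpr ⟨hS x hx.1, hx.2⟩
  calc cnt S j ≤ (Finset.Ico 1 j).card := Finset.card_le_card this
    _ = j - 1 := Nat.card_Ico 1 j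

lemma cnt_of_ge {n : ℕ} {S : Finset ℕ} (hS : S ⊆ Finset.Icc 1 (n - 1)) {j : ℕ}
    (hj : n ≤ j) : cnt S j = S.card := by
  unfold cnt
  congr 1
  apply Finset.filter_true_of_mem
  intro x hx
  have := Finset.mem_Icc.mp (hS hx)
  omega

lemma mem_Icc_of_subset {n : ℕ} {S : Finset ℕ} (hS : S ⊆ Finset.Icc 1 (n - 1))
    {x : ℕ} (hx : x ∈ S) : 1 ≤ x ∧ x ≤ n - 1 := Finset.mem_Icc.mp (hS hx)

lemma wS_eq {n : ℕ} (S : Finset ℕ) {j : ℕ} (h1 : 1 ≤ j) (h2 : j ≤ n) :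
    wS n S j = j - cnt S j := if_pos ⟨h1, h2⟩

lemma wS_step {n : ℕ} {S : Finset ℕ} (hS : S ⊆ Finset.Icc 1 (n - 1)) {j : ℕ}
    (h1 : 1 ≤ j) (h2 : j + 1 ≤ n) :
    wS n S (j + 1) = wS n S j + if j ∈ S then 0 else 1 := by
  have hone : ∀ x ∈ S, 1 ≤ x := fun x hx => (mem_Icc_of_subset hS hx).1
  have hc := cnt_le S hone j
  rw [wS_eq S h1 (by omega), wS_eq S (by omega) h2, cnt_succ]
  split <;> omega

lemma wS_ge_one {n : ℕ} {S : Finset ℕ} (hS : S ⊆ Finset.Icc 1 (n - 1)) {j : ℕ}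
    (h1 : 1 ≤ j) (h2 : j ≤ n) : 1 ≤ wS n S j := by
  have hone : ∀ x ∈ S, 1 ≤ x := fun x hx => (mem_Icc_of_subset hS hx).1
  have hc := cnt_le S hone j
  rw [wS_eq S h1 h2]; omega

lemma wS_one {n : ℕ} {S : Finset ℕ} (hS : S ⊆ Finset.Icc 1 (n - 1)) (hn : 1 ≤ n) :
    wS n S 1 = 1 := by
  have : cnt S 1 = 0 := by
    unfold cnt
    rw [Finset.card_eq_zero, Finset.filter_eq_empty_iff]
    intro x hx
    have := (mem_Icc_of_subset hS hx).1
    omega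
  rw [wS_eq S le_rfl hn, this]

lemma wS_mono {n : ℕ} {S : Finset ℕ} (hS : S ⊆ Finset.Icc 1 (n - 1)) {a b : ℕ}
    (h1 : 1 ≤ a) (hab : a ≤ b) (h2 : b ≤ n) : wS n S a ≤ wS n S b := by
  induction b, hab using Nat.le_induction with
  | base => exact le_rfl
  | succ b hb ih =>
    have := wS_step hS (by omega : 1 ≤ b) h2
    have := ih (by omega)
    split at * <;> omega

lemma wS_last {n : ℕ} {S : Finset ℕ} (hS : S ⊆ Finset.Icc 1 (n - 1)) (hn : 1 ≤ n) :
    wS n S n = n - S.card := by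
  rw [wS_eq S hn le_rfl, cnt_of_ge hS le_rfl]

lemma wS_le {n : ℕ} {S : Finset ℕ} (hS : S ⊆ Finset.Icc 1 (n - 1)) {j : ℕ}
    (h1 : 1 ≤ j) (h2 : j ≤ n) : wS n S j ≤ n - S.card := by
  have := wS_mono hS h1 h2 le_rfl
  rwa [wS_last hS (by omega)] at this

lemma card_le_of_subset_Icc {n : ℕ} {S : Finset ℕ} (hS : S ⊆ Finset.Icc 1 (n - 1)) :
    S.card ≤ n - 1 := by
  calc S.card ≤ (Finset.Icc 1 (n - 1)).card := Finset.card_le_card hS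
    _ = n - 1 := by rw [Nat.card_Icc]; omega

lemma desSet_wS {n : ℕ} {S : Finset ℕ} (hS : S ⊆ Finset.Icc 1 (n - 1)) (hn : 1 ≤ n) :
    desSet n (wS n S) = S := by
  ext i
  simp only [desSet, Finset.mem_filter, Finset.mem_Icc]
  constructor
  · rintro ⟨⟨hi1, hi2⟩, hle⟩
    have hstep := wS_step hS hi1 (by omega)
    by_contra h
    rw [if_neg h] at hstep
    omega
  · intro hi
    obtain ⟨hi1, hi2⟩ := mem_Icc_of_subset hS hi
    have hstep := wS_step hS hi1 (by omega)
    rw [if_pos hi] at hstep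
    exact ⟨⟨hi1, hi2⟩, by omega⟩

lemma wS_ivt {n : ℕ} {S : Finset ℕ} (hS : S ⊆ Finset.Icc 1 (n - 1)) (hn : 1 ≤ n) :
    ∀ k, 1 ≤ k → k ≤ n → ∀ m, 1 ≤ m → m ≤ wS n S k →
      ∃ j, 1 ≤ j ∧ j ≤ k ∧ wS n S j = m := by
  intro k hk
  induction k, hk using Nat.le_induction with
  | base =>
    intro hkn m hm1 hm2
    rw [wS_one hS hn] at hm2
    exact ⟨1, le_rfl, le_rfl, by rw [wS_one hS hn]; omega⟩
  | succ k hk ih =>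
    intro hkn m hm1 hm2
    have hstep := wS_step hS (by omega) hkn
    by_cases h : m ≤ wS n S k
    · obtain ⟨j, hj1, hj2, hj3⟩ := ih (by omega) m hm1 h
      exact ⟨j, hj1, by omega, hj3⟩
    · refine ⟨k + 1, by omega, le_rfl, ?_⟩
      split at hstep <;> omega

lemma isWI_wS {n : ℕ} {S : Finset ℕ} (hS : S ⊆ Finset.Icc 1 (n - 1)) (hn : 1 ≤ n) :
    IsWI n (wS n S) := by
  refine ⟨⟨?_, n - S.card, ?_⟩, ?_⟩
  · intro i hi
    simp only [Set.mem_Icc] at hi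
    exact if_neg hi
  · ext m
    simp only [Set.mem_image, Set.mem_Icc]
    constructor
    · rintro ⟨j, ⟨hj1, hj2⟩, rfl⟩
      exact ⟨wS_ge_one hS hj1 hj2, wS_le hS hj1 hj2⟩
    · rintro ⟨hm1, hm2⟩
      obtain ⟨j, hj1, hj2, hj3⟩ := wS_ivt hS hn n hn le_rfl m hm1
        (by rw [wS_last hS hn]; omega)
      exact ⟨j, ⟨hj1, hj2⟩, hj3⟩
  · intro a ha b hb hab
    simp only [Set.mem_Icc] at ha hb
    exact wS_mono hS ha.1 hab hb.2

lemma monotoneOn_of_adj {n : ℕ} {f : ℕ → ℕ}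
    (h : ∀ i, 1 ≤ i → i + 1 ≤ n → f i ≤ f (i + 1)) :
    MonotoneOn f (Set.Icc 1 n) := by
  intro a ha b hb hab
  simp only [Set.mem_Icc] at ha hb
  induction b, hab using Nat.le_induction with
  | base => exact le_rfl
  | succ b hb' ih =>
    exact le_trans (ih ⟨by omega, by omega⟩ ) (h b (by omega) (by omega))

/-- Uniqueness: a weakly increasing Cayley permutation is determined by its descent set. -/
lemma isWI_eq_wS {n : ℕ} {u : ℕ → ℕ} (hn : 1 ≤ n) (hu : IsWI n u) :
    u = wS n (desSet n u) := by
  obtain ⟨⟨hword, k, himg⟩, hmono⟩ := hu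
  set D := desSet n u with hD
  have hDsub : D ⊆ Finset.Icc 1 (n - 1) := Finset.filter_subset _ _
  -- every value of u on [1,n] lies in [1,k]
  have hval : ∀ j, 1 ≤ j → j ≤ n → 1 ≤ u j ∧ u j ≤ k := by
    intro j h1 h2
    have : u j ∈ Set.Icc 1 k := himg ▸ Set.mem_image_of_mem u (Set.mem_Icc.mpr ⟨h1, h2⟩)
    exact Set.mem_Icc.mp this
  have hu1 : u 1 = 1 := by
    have h1k : (1 : ℕ) ∈ Set.Icc 1 k := Set.mem_Icc.mpr ⟨le_rfl, (hval 1 le_rfl hn).1.trans (hval 1 le_rfl hn).2⟩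
    rw [← himg] at h1k
    obtain ⟨i, hi, hui⟩ := h1k
    simp only [Set.mem_Icc] at hi
    have := hmono (Set.mem_Icc.mpr ⟨le_rfl, hn⟩) (Set.mem_Icc.mpr hi) hi.1
    have := (hval 1 le_rfl hn).1
    omega
  have hstep : ∀ j, 1 ≤ j → j + 1 ≤ n →
      u (j + 1) = u j + if j ∈ D then 0 else 1 := by
    intro j h1 h2
    have hmono' : u j ≤ u (j + 1) :=
      hmono (Set.mem_Icc.mpr ⟨h1, by omega⟩) (Set.mem_Icc.mpr ⟨by omega, h2⟩) (by omega)
    by_cases hjD : j ∈ D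
    · rw [if_pos hjD]
      have : u (j + 1) ≤ u j := (Finset.mem_filter.mp hjD).2
      omega
    · rw [if_neg hjD]
      have hlt : u j < u (j + 1) := by
        by_contra hc
        exact hjD (Finset.mem_filter.mpr ⟨Finset.mem_Icc.mpr ⟨h1, by omega⟩, by omega⟩)
      -- no skips: u (j+1) ≤ u j + 1
      by_contra hc
      have hskip : u j + 2 ≤ u (j + 1) := by omega
      have hmem : (u j + 1) ∈ Set.Icc 1 k := by
        have := (hval j h1 (by omega)).1
        have := (hval (j + 1) (by omega) h2).2
        exact Set.mem_Icc.mpr ⟨by omega, by omega⟩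
      rw [← himg] at hmem
      obtain ⟨i, hi, hui⟩ := hmem
      simp only [Set.mem_Icc] at hi
      rcases le_or_gt i j with hij | hij
      · have := hmono (Set.mem_Icc.mpr hi) (Set.mem_Icc.mpr ⟨h1, by omega⟩) hij
        omega
      · have := hmono (Set.mem_Icc.mpr ⟨by omega, h2⟩) (Set.mem_Icc.mpr hi) (by omega)
        omega
  funext j
  by_cases hj : 1 ≤ j ∧ j ≤ n
  · obtain ⟨hj1, hj2⟩ := hj
    have key : ∀ j, 1 ≤ j → j ≤ n → u j = wS n D j := by
      intro j hj1
      induction j, hj1 using Nat.le_induction with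
      | base => intro _; rw [wS_one hDsub hn, hu1]
      | succ j hj ih =>
        intro h2
        rw [wS_step hDsub (by omega) h2, hstep j (by omega) h2, ih (by omega)]
    exact key j hj1 hj2
  · rw [hword j (by simpa [Set.mem_Icc] using hj)]
    exact (if_neg hj).symm

lemma wmax_eq {n m : ℕ} {f : ℕ → ℕ} (hub : ∀ j, 1 ≤ j → j ≤ n → f j ≤ m)
    (hex : ∃ j, 1 ≤ j ∧ j ≤ n ∧ f j = m) : wmax n f = m := by
  obtain ⟨j, hj1, hj2, hj3⟩ := hex
  apply le_antisymm
  · apply Finset.sup_le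
    intro i hi
    obtain ⟨h1, h2⟩ := Finset.mem_Icc.mp hi
    exact hub i h1 h2
  · exact hj3 ▸ Finset.le_sup (Finset.mem_Icc.mpr ⟨hj1, hj2⟩)

lemma wmax_wS {n : ℕ} {S : Finset ℕ} (hS : S ⊆ Finset.Icc 1 (n - 1)) (hn : 1 ≤ n) :
    wmax n (wS n S) = n - S.card :=
  wmax_eq (fun j h1 h2 => wS_le hS h1 h2) ⟨n, hn, le_rfl, wS_last hS hn⟩

/-! ### permWord lemmas -/

lemma permWord_mem {n : ℕ} (τ : Equiv.Perm (Fin n)) {i : ℕ} (h1 : 1 ≤ i) (h2 : i ≤ n) :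
    1 ≤ permWord n τ i ∧ permWord n τ i ≤ n := by
  unfold permWord
  rw [dif_pos ⟨h1, h2⟩]
  have := (τ ⟨i - 1, by omega⟩).isLt
  omega

lemma permWord_inv {n : ℕ} (τ : Equiv.Perm (Fin n)) {i : ℕ} (h1 : 1 ≤ i) (h2 : i ≤ n) :
    permWord n τ⁻¹ (permWord n τ i) = i := by
  have hlt : i - 1 < n := by omega
  have hbd := (τ ⟨i - 1, hlt⟩).isLt
  have hv : permWord n τ i = (τ ⟨i - 1, hlt⟩ : ℕ) + 1 := dif_pos ⟨h1, h2⟩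
  have hmem : 1 ≤ (τ ⟨i - 1, hlt⟩ : ℕ) + 1 ∧ (τ ⟨i - 1, hlt⟩ : ℕ) + 1 ≤ n :=
    ⟨by omega, by omega⟩
  rw [hv]
  show permWord n τ⁻¹ _ = i
  unfold permWord
  rw [dif_pos hmem]
  have heq : (⟨(τ ⟨i - 1, hlt⟩ : ℕ) + 1 - 1, by omega⟩ : Fin n) = τ ⟨i - 1, hlt⟩ := by
    apply Fin.ext; simp
  rw [heq, Equiv.Perm.inv_def, Equiv.symm_apply_apply]
  simp only [Fin.val_mk]
  omega

lemma permWord_inj {n : ℕ} (τ : Equiv.Perm (Fin n)) {a b : ℕ} (ha1 : 1 ≤ a) (ha2 : a ≤ n)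
    (hb1 : 1 ≤ b) (hb2 : b ≤ n) (h : permWord n τ a = permWord n τ b) : a = b := by
  have := permWord_inv τ ha1 ha2
  have := permWord_inv τ hb1 hb2
  rw [h] at *
  omega

lemma permWord_zero {n : ℕ} (τ : Equiv.Perm (Fin n)) {j : ℕ} (h : ¬(1 ≤ j ∧ j ≤ n)) :
    permWord n τ j = 0 := dif_neg h

lemma permWord_image {n : ℕ} (τ : Equiv.Perm (Fin n)) :
    permWord n τ '' Set.Icc 1 n = Set.Icc 1 n := by
  apply Set.Subset.antisymm
  · rintro m ⟨j, hj, rfl⟩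
    simp only [Set.mem_Icc] at hj ⊢
    exact permWord_mem τ hj.1 hj.2
  · intro j hj
    simp only [Set.mem_Icc] at hj
    refine ⟨permWord n τ⁻¹ j, ?_, ?_⟩
    · simp only [Set.mem_Icc]
      exact permWord_mem τ⁻¹ hj.1 hj.2
    · have := permWord_inv τ⁻¹ hj.1 hj.2
      rwa [inv_inv] at this

/-! ### The elements of the Fishburn basis -/

/-- The element of `basis(permWord n σ⁻¹)` corresponding to `T ⊆ Des(permWord n σ⁻¹)`. -/
def xw (n : ℕ) (σ : Equiv.Perm (Fin n)) (T : Finset ℕ) : ℕ → ℕ :=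
  fun j => wS n T (permWord n σ j)

section Perm

variable {n : ℕ} {σ : Equiv.Perm (Fin n)}

lemma pv_eq {i : ℕ} (h1 : 1 ≤ i) (h2 : i ≤ n) :
    permWord n σ (permWord n σ⁻¹ i) = i := by
  have := permWord_inv σ⁻¹ h1 h2
  rwa [inv_inv] at this

lemma vp_eq {i : ℕ} (h1 : 1 ≤ i) (h2 : i ≤ n) :
    permWord n σ⁻¹ (permWord n σ i) = i := permWord_inv σ h1 h2

variable {T : Finset ℕ}

lemma hT_Icc (hT : T ⊆ desSet n (permWord n σ⁻¹)) : T ⊆ Finset.Icc 1 (n - 1) :=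
  hT.trans (Finset.filter_subset _ _)

lemma xw_zero {j : ℕ} (h : ¬(1 ≤ j ∧ j ≤ n)) : xw n σ T j = 0 := by
  unfold xw
  rw [permWord_zero σ h]
  exact if_neg (by omega)

lemma xw_comp_v {i : ℕ} (h1 : 1 ≤ i) (h2 : i ≤ n) :
    xw n σ T (permWord n σ⁻¹ i) = wS n T i := by
  unfold xw
  rw [pv_eq h1 h2]

lemma xw_isCayley (hn : 1 ≤ n) (hT : T ⊆ desSet n (permWord n σ⁻¹)) : IsCayley n (xw n σ T) := by
  refine ⟨fun i hi => xw_zero (by simpa [Set.mem_Icc] using hi), n - T.card, ?_⟩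
  have hTI := hT_Icc hT
  apply Set.Subset.antisymm
  · rintro m ⟨j, hj, rfl⟩
    simp only [Set.mem_Icc] at hj ⊢
    have hp := permWord_mem σ hj.1 hj.2
    exact ⟨wS_ge_one hTI hp.1 hp.2, wS_le hTI hp.1 hp.2⟩
  · intro m hm
    simp only [Set.mem_Icc] at hm
    obtain ⟨j, hj1, hj2, hj3⟩ := wS_ivt hTI hn n hn le_rfl m hm.1
      (by rw [wS_last hTI hn]; omega)
    refine ⟨permWord n σ⁻¹ j, ?_, ?_⟩
    · simp only [Set.mem_Icc]
      exact permWord_mem σ⁻¹ hj1 hj2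
    · rw [xw_comp_v hj1 hj2, hj3]

lemma xw_sorts (hn : 1 ≤ n) (hT : T ⊆ desSet n (permWord n σ⁻¹)) : sortsColumns n (xw n σ T) (permWord n σ⁻¹) := by
  intro i hi
  obtain ⟨hi1, hi2⟩ := Finset.mem_Icc.mp hi
  have hn2 : i + 1 ≤ n := by omega
  have hTI := hT_Icc hT
  rw [xw_comp_v hi1 (by omega), xw_comp_v (by omega) hn2]
  have hstep := wS_step hTI hi1 hn2
  by_cases hiT : i ∈ T
  · rw [if_pos hiT] at hstep
    refine Or.inr ⟨by omega, ?_⟩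
    have hdes := Finset.mem_filter.mp (hT hiT)
    have hle : permWord n σ⁻¹ (i + 1) ≤ permWord n σ⁻¹ i := hdes.2
    have hne : permWord n σ⁻¹ (i + 1) ≠ permWord n σ⁻¹ i := by
      intro h
      have := permWord_inj σ⁻¹ (a := i + 1) (b := i) (by omega) hn2 hi1 (by omega) h
      omega
    omega
  · rw [if_neg hiT] at hstep
    exact Or.inl (by omega)

/-- If `wS` takes the same value at `a < b`, then `v` strictly decreases from `a` to `b`. -/
lemma v_lt_of_wS_eq (hn : 1 ≤ n) (hT : T ⊆ desSet n (permWord n σ⁻¹)) : ∀ d a, 1 ≤ a → a + (d + 1) ≤ n →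
    wS n T a = wS n T (a + (d + 1)) →
    permWord n σ⁻¹ (a + (d + 1)) < permWord n σ⁻¹ a := by
  have hTI := hT_Icc hT
  have base : ∀ a, 1 ≤ a → a + 1 ≤ n → wS n T a = wS n T (a + 1) →
      permWord n σ⁻¹ (a + 1) < permWord n σ⁻¹ a := by
    intro a h1 h2 heq
    have hstep := wS_step hTI h1 h2
    have haT : a ∈ T := by by_contra h; rw [if_neg h] at hstep; omega
    have hdes := Finset.mem_filter.mp (hT haT)
    have hle : permWord n σ⁻¹ (a + 1) ≤ permWord n σ⁻¹ a := hdes.2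
    have hne : permWord n σ⁻¹ (a + 1) ≠ permWord n σ⁻¹ a := by
      intro h
      have := permWord_inj σ⁻¹ (a := a + 1) (b := a) (by omega) h2 h1 (by omega) h
      omega
    omega
  intro d
  induction d with
  | zero => exact fun a h1 h2 heq => base a h1 h2 heq
  | succ d ih =>
    intro a h1 h2 heq
    have e1 : a + (d + 1 + 1) = a + 1 + (d + 1) := by omega
    have hm1 : wS n T a ≤ wS n T (a + 1) := wS_mono hTI h1 (by omega) (by omega)
    have hm2 : wS n T (a + 1) ≤ wS n T (a + 1 + (d + 1)) :=
      wS_mono hTI (by omega) (by omega) (by omega)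
    rw [e1] at heq
    have hb : permWord n σ⁻¹ (a + 1) < permWord n σ⁻¹ a :=
      base a h1 (by omega) (by omega)
    have hi' : permWord n σ⁻¹ (a + 1 + (d + 1)) < permWord n σ⁻¹ (a + 1) :=
      ih (a + 1) (by omega) (by omega) (by omega)
    rw [e1]
    omega

lemma desSet_xw (hn : 1 ≤ n) (hT : T ⊆ desSet n (permWord n σ⁻¹)) : desSet n (xw n σ T) = desSet n (permWord n σ) := by
  have hTI := hT_Icc hT
  ext i
  simp only [desSet, Finset.mem_filter, Finset.mem_Icc]
  constructor
  · rintro ⟨⟨hi1, hi2⟩, hle⟩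
    refine ⟨⟨hi1, hi2⟩, ?_⟩
    by_contra hlt
    push_neg at hlt
    -- p i < p (i+1); show wS (p i) < wS (p (i+1)), contradicting hle
    set a := permWord n σ i with ha
    set b := permWord n σ (i + 1) with hb
    have hamem := permWord_mem σ hi1 (by omega)
    have hbmem := permWord_mem σ (i := i + 1) (by omega) (by omega)
    have hmono : wS n T a ≤ wS n T b := wS_mono hTI hamem.1 (le_of_lt hlt) hbmem.2
    have hnq : wS n T a ≠ wS n T b := by
      intro heq
      obtain ⟨d, hd⟩ : ∃ d, b = a + (d + 1) := ⟨b - a - 1, by omega⟩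
      have := v_lt_of_wS_eq hn hT d a hamem.1 (by omega) (by rw [← hd]; exact heq)
      rw [← hd] at this
      rw [ha, hb] at this
      rw [vp_eq hi1 (by omega), vp_eq (i := i+1) (by omega) (by omega)] at this
      omega
    have : xw n σ T (i + 1) = wS n T b := rfl
    have : xw n σ T i = wS n T a := rfl
    omega
  · rintro ⟨⟨hi1, hi2⟩, hle⟩
    refine ⟨⟨hi1, hi2⟩, ?_⟩
    have hbmem := permWord_mem σ (i := i + 1) (by omega) (by omega : i + 1 ≤ n)
    have hamem := permWord_mem σ hi1 (by omega)
    exact wS_mono hTI hbmem.1 hle hamem.2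

lemma wmax_xw (hn : 1 ≤ n) (hT : T ⊆ desSet n (permWord n σ⁻¹)) : wmax n (xw n σ T) = n - T.card := by
  have hTI := hT_Icc hT
  apply wmax_eq
  · intro j h1 h2
    have hp := permWord_mem σ h1 h2
    exact wS_le hTI hp.1 hp.2
  · have hv := permWord_mem σ⁻¹ hn le_rfl
    exact ⟨permWord n σ⁻¹ n, hv.1, hv.2, by rw [xw_comp_v hn le_rfl, wS_last hTI hn]⟩

lemma inner_set_eq (hn : 1 ≤ n) {D : Finset ℕ} (hD : D ⊆ Finset.Icc 1 (n - 1)) :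
    {u : ℕ → ℕ | IsWI n u ∧ desSet n u ⊆ D} = ↑(D.powerset.image (wS n)) := by
  ext u
  simp only [Set.mem_setOf_eq, Finset.coe_image, Set.mem_image, Finset.mem_coe,
    Finset.mem_powerset]
  constructor
  · rintro ⟨hu, hsub⟩
    exact ⟨desSet n u, hsub, (isWI_eq_wS hn hu).symm⟩
  · rintro ⟨S, hSD, rfl⟩
    exact ⟨isWI_wS (hSD.trans hD) hn, by rw [desSet_wS (hSD.trans hD) hn]; exact hSD⟩

lemma wS_injOn (hn : 1 ≤ n) {D : Finset ℕ} (hD : D ⊆ Finset.Icc 1 (n - 1)) :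
    ∀ S ∈ D.powerset, ∀ S' ∈ D.powerset, wS n S = wS n S' → S = S' := by
  intro S hS S' hS' h
  rw [Finset.mem_powerset] at hS hS'
  rw [← desSet_wS (hS.trans hD) hn, ← desSet_wS (hS'.trans hD) hn, h]

lemma basis_mem_eq (hn : 1 ≤ n) {x : ℕ → ℕ}
    (hx : x ∈ fishburnBasis n (permWord n σ⁻¹)) :
    ∃ T ∈ (desSet n (permWord n σ⁻¹)).powerset, x = xw n σ T := by
  obtain ⟨hx1, hx2⟩ := hx
  have hx0 : x 0 = 0 := hx1.1 0 (by simp [Set.mem_Icc])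
  set y : ℕ → ℕ := fun j => x (permWord n σ⁻¹ j) with hy
  have hyword : IsWord n y := by
    intro i hi
    show x (permWord n σ⁻¹ i) = 0
    rw [permWord_zero σ⁻¹ (by simpa [Set.mem_Icc] using hi), hx0]
  have hyadj : ∀ i, 1 ≤ i → i + 1 ≤ n → y i ≤ y (i + 1) := by
    intro i h1 h2
    rcases hx2 i (Finset.mem_Icc.mpr ⟨h1, by omega⟩) with h | h
    · exact le_of_lt h
    · exact le_of_eq h.1
  have hymono : MonotoneOn y (Set.Icc 1 n) := monotoneOn_of_adj hyadj
  obtain ⟨k, hk⟩ := hx1.2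
  have hyimg : y '' Set.Icc 1 n = Set.Icc 1 k := by
    rw [hy, ← Set.image_image x (permWord n σ⁻¹), permWord_image σ⁻¹, hk]
  have hyWI : IsWI n y := ⟨⟨hyword, k, hyimg⟩, hymono⟩
  set T := desSet n y with hT
  have hTsub : T ⊆ desSet n (permWord n σ⁻¹) := by
    intro i hiT
    obtain ⟨hiIcc, hile⟩ := Finset.mem_filter.mp hiT
    rcases hx2 i hiIcc with h | h
    · exact absurd hile (by simpa [hy] using not_le.mpr h)
    · exact Finset.mem_filter.mpr ⟨hiIcc, le_of_lt h.2⟩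
  have hyw : y = wS n T := isWI_eq_wS hn hyWI
  refine ⟨T, Finset.mem_powerset.mpr hTsub, ?_⟩
  funext j
  by_cases hj : 1 ≤ j ∧ j ≤ n
  · have hvp : permWord n σ⁻¹ (permWord n σ j) = j := vp_eq hj.1 hj.2
    calc x j = y (permWord n σ j) := by rw [hy]; simp only [hvp]
      _ = wS n T (permWord n σ j) := by rw [hyw]
      _ = xw n σ T j := rfl
  · rw [hx1.1 j (by simpa [Set.mem_Icc] using hj), xw_zero hj]

lemma basis_set_eq (hn : 1 ≤ n) :
    fishburnBasis n (permWord n σ⁻¹)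
      = ↑(((desSet n (permWord n σ⁻¹)).powerset).image (xw n σ)) := by
  ext x
  simp only [Finset.coe_image, Set.mem_image, Finset.mem_coe]
  constructor
  · intro hx
    obtain ⟨T, hT, rfl⟩ := basis_mem_eq hn hx
    exact ⟨T, hT, rfl⟩
  · rintro ⟨T, hT, rfl⟩
    have hT' := Finset.mem_powerset.mp hT
    exact ⟨xw_isCayley hn hT', xw_sorts hn hT'⟩

lemma xw_injOn (hn : 1 ≤ n) :
    ∀ T ∈ (desSet n (permWord n σ⁻¹)).powerset,
      ∀ T' ∈ (desSet n (permWord n σ⁻¹)).powerset,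
        xw n σ T = xw n σ T' → T = T' := by
  intro T hT T' hT' h
  rw [Finset.mem_powerset] at hT hT'
  have hD : desSet n (permWord n σ⁻¹) ⊆ Finset.Icc 1 (n - 1) := Finset.filter_subset _ _
  have hw : wS n T = wS n T' := by
    funext j
    by_cases hj : 1 ≤ j ∧ j ≤ n
    · rw [← xw_comp_v (σ := σ) (T := T) hj.1 hj.2,
        ← xw_comp_v (σ := σ) (T := T') hj.1 hj.2, h]
    · rw [show wS n T j = 0 from if_neg hj, show wS n T' j = 0 from if_neg hj]
  rw [← desSet_wS (hT.trans hD) hn, ← desSet_wS (hT'.trans hD) hn, hw]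

end Perm

lemma sum_powerset_pow {R : Type*} [CommRing R] (X : R) (D : Finset ℕ) :
    ∑ S ∈ D.powerset, X ^ S.card = (1 + X) ^ D.card := by
  calc ∑ S ∈ D.powerset, X ^ S.card
      = ∑ S ∈ D.powerset, (∏ _i ∈ S, X) * ∏ _i ∈ D \ S, (1 : R) := by
        refine Finset.sum_congr rfl fun S _ => ?_
        rw [Finset.prod_const, Finset.prod_const, one_pow, mul_one]
    _ = ∏ _i ∈ D, (X + 1) := (Finset.prod_add _ _ _).symm
    _ = (1 + X) ^ D.card := by rw [Finset.prod_const, add_comm]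

/-- Proposition 6.4: for a permutation `p`,
`(1+s)^{des(p)} (1+t)^{des(p⁻¹)} =
 Σ_{x ∈ basis(p⁻¹)} Σ_{u ∈ WI(x)} s^{n−max(u)} t^{n−max(x)}` in `ℤ[s,t]`. -/
theorem stmt12 (n : ℕ) (hn : 1 ≤ n) (σ : Equiv.Perm (Fin n)) :
    (1 + MvPolynomial.X 0 : MvPolynomial (Fin 2) ℤ) ^ des n (permWord n σ) *
        (1 + MvPolynomial.X 1) ^ des n (permWord n σ⁻¹)
      = ∑ᶠ x ∈ fishburnBasis n (permWord n σ⁻¹),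
          ∑ᶠ u ∈ {u : ℕ → ℕ | IsWI n u ∧ desSet n u ⊆ desSet n x},
            (MvPolynomial.X 0 : MvPolynomial (Fin 2) ℤ) ^ (n - wmax n u) *
              MvPolynomial.X 1 ^ (n - wmax n x) := by
  classical
  have hdv : desSet n (permWord n σ⁻¹) ⊆ Finset.Icc 1 (n - 1) := Finset.filter_subset _ _
  have hdp : desSet n (permWord n σ) ⊆ Finset.Icc 1 (n - 1) := Finset.filter_subset _ _
  rw [basis_set_eq (σ := σ) hn, finsum_mem_coe_finset, Finset.sum_image (xw_injOn hn)]
  have hterm : ∀ T ∈ (desSet n (permWord n σ⁻¹)).powerset,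
      (∑ᶠ u ∈ {u : ℕ → ℕ | IsWI n u ∧ desSet n u ⊆ desSet n (xw n σ T)},
          (MvPolynomial.X 0 : MvPolynomial (Fin 2) ℤ) ^ (n - wmax n u) *
            MvPolynomial.X 1 ^ (n - wmax n (xw n σ T)))
        = (1 + MvPolynomial.X 0 : MvPolynomial (Fin 2) ℤ) ^ des n (permWord n σ) *
            MvPolynomial.X 1 ^ T.card := by
    intro T hT
    have hT' := Finset.mem_powerset.mp hT
    have hTI := hT_Icc hT'
    have hTcard : T.card ≤ n - 1 := card_le_of_subset_Icc hTI
    rw [desSet_xw hn hT', wmax_xw hn hT',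
      show n - (n - T.card) = T.card by omega,
      inner_set_eq hn hdp, finsum_mem_coe_finset, Finset.sum_image (wS_injOn hn hdp)]
    have hSterm : ∀ S ∈ (desSet n (permWord n σ)).powerset,
        (MvPolynomial.X 0 : MvPolynomial (Fin 2) ℤ) ^ (n - wmax n (wS n S)) *
            MvPolynomial.X 1 ^ T.card
          = MvPolynomial.X 0 ^ S.card * MvPolynomial.X 1 ^ T.card := by
      intro S hS
      have hS' := (Finset.mem_powerset.mp hS).trans hdp
      have hScard : S.card ≤ n - 1 := card_le_of_subset_Icc hS'
      rw [wmax_wS hS' hn, show n - (n - S.card) = S.card by omega]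
    rw [Finset.sum_congr rfl hSterm, ← Finset.sum_mul, sum_powerset_pow]
    rfl
  rw [Finset.sum_congr rfl hterm, ← Finset.mul_sum, sum_powerset_pow]
  rfl

end CayPaper
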